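/- In the free unital associative ℂ-algebra ℂ⟨x, y⟩ on two generators one has the identity a·xy + b·x² + c·y² + d·yx = ((d−a)/2)·[ (yx − xy) − ((q²−1)/(q²+1))·( y² − x² − λ(x − y)² ) ]. -/

import Mathlib

/-- In the free algebra ℂ⟨x,y⟩, under the linear conditions on `a,b,c,d`,
the generator `a·xy + b·x² + c·y² + d·yx` of the ideal is a multiple of
`[y,x] − ((q²−1)/(q²+1))(y² − x² − λ(x−y)²)` with
`λ = ((q²+1)/(q²−1))·(a+d)/(a−d)`. -/
theorem ideal_generator_normal_form (q a b c d lam : ℂ)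
    (hq0 : q ≠ 0) (hq1 : q ^ 2 ≠ 1) (hq2 : q ^ 2 ≠ -1) (had : a ≠ d)
    (h1 : a * q ^ 2 + b * (1 + q ^ 2) + d = 0)
    (h2 : a + c * (1 + q ^ 2) + d * q ^ 2 = 0)
    (hlam : lam = (q ^ 2 + 1) / (q ^ 2 - 1) * (a + d) / (a - d)) :
    let x : FreeAlgebra ℂ (Fin 2) := FreeAlgebra.ι ℂ 0
    let y : FreeAlgebra ℂ (Fin 2) := FreeAlgebra.ι ℂ 1
    a • (x * y) + b • (x * x) + c • (y * y) + d • (y * x) =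
      ((d - a) / 2) • ((y * x - x * y) -
        ((q ^ 2 - 1) / (q ^ 2 + 1)) • (y ^ 2 - x ^ 2 - lam • (x - y) ^ 2)) := by
  intro x y
  have hne1 : q ^ 2 - 1 ≠ 0 := sub_ne_zero.mpr hq1
  have hne2 : q ^ 2 + 1 ≠ 0 := fun h => hq2 (by linear_combination h)
  have hnead : a - d ≠ 0 := sub_ne_zero.mpr had
  have hsq : (x - y) ^ 2 = x*x - x*y - y*x + y*y := by rw [pow_two]; noncomm_ring
  have hx2 : x ^ 2 = x*x := by rw [pow_two]
  have hy2 : y ^ 2 = y*y := by rw [pow_two]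
  rw [hsq, hx2, hy2]
  subst hlam
  match_scalars
  · field_simp
    ring
  · field_simp
    linear_combination (2 * (a-d)) * h1
  · field_simp
    linear_combination (2 * (a-d)) * h2
  · field_simp
    ring
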